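/- For any shrinkage rule μ̂ (a measurable function with 0 ≤ μ̂(x) ≤ x for x ≥ 0 and μ̂(−x) = −μ̂(x)), any real μ, and X ~ N(μ, 1): E|μ̂(X) − μ|^q ≤ |μ|^q + E|Z|^q for 0 < q ≤ 2, where Z ~ N(0,1). -/
import Mathlib


open Real MeasureTheory ProbabilityTheory

lemma integrable_one_add_sq_gaussian :
    Integrable (fun z : ℝ => 1 + z ^ 2) (gaussianReal 0 1) := by
  rw [gaussianReal_of_var_ne_zero _ one_ne_zero,
    integrable_withDensity_iff (measurable_gaussianPDF 0 1)
      (Filter.Eventually.of_forall fun x => ENNReal.ofReal_lt_top)]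
  have heq : ∀ x : ℝ, (1 + x ^ 2) * (gaussianPDF 0 1 x).toReal
      = (√(2 * π))⁻¹ * rexp (-(1/2) * x ^ 2)
        + (√(2 * π))⁻¹ * (x ^ 2 * rexp (-(1/2) * x ^ 2)) := by
    intro x
    rw [gaussianPDF, ENNReal.toReal_ofReal (gaussianPDFReal_nonneg 0 1 x), gaussianPDFReal]
    simp only [NNReal.coe_one, mul_one, sub_zero]
    ring_nf
  refine (integrable_congr (Filter.Eventually.of_forall heq)).mpr ?_
  refine Integrable.add ?_ ?_
  · exact (integrable_exp_neg_mul_sq (by norm_num : (0:ℝ) < 1/2)).const_mul _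
  · have h := integrable_rpow_mul_exp_neg_mul_sq (by norm_num : (0:ℝ) < 1/2)
      (by norm_num : (-1:ℝ) < 2)
    have h2 : Integrable (fun x : ℝ => x ^ 2 * rexp (-(1/2) * x ^ 2)) := by
      refine (integrable_congr (Filter.Eventually.of_forall fun x => ?_)).mp h
      rw [← Real.rpow_natCast x 2]
      norm_num
    exact h2.const_mul _

lemma rpow_abs_le_one_add_sq {q : ℝ} (hq0 : 0 < q) (hq2 : q ≤ 2) (z : ℝ) :
    |z| ^ q ≤ 1 + z ^ 2 := by
  rcases le_or_gt (|z|) 1 with h | h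
  · have : |z| ^ q ≤ 1 := Real.rpow_le_one (abs_nonneg z) h hq0.le
    nlinarith [sq_nonneg z]
  · have h1 : |z| ^ q ≤ |z| ^ (2:ℝ) := Real.rpow_le_rpow_of_exponent_le h.le hq2
    have h2 : |z| ^ (2:ℝ) = z ^ 2 := by
      rw [Real.rpow_two, sq_abs]
    nlinarith [h1, h2]

lemma integrable_abs_rpow_gaussian {q : ℝ} (hq0 : 0 < q) (hq2 : q ≤ 2) :
    Integrable (fun z : ℝ => |z| ^ q) (gaussianReal 0 1) := by
  refine integrable_one_add_sq_gaussian.mono' ?_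
    (Filter.Eventually.of_forall fun z => ?_)
  · exact (by fun_prop : Measurable fun z : ℝ => |z| ^ q).aestronglyMeasurable
  · rw [Real.norm_eq_abs, abs_of_nonneg (Real.rpow_nonneg (abs_nonneg z) q)]
    exact rpow_abs_le_one_add_sq hq0 hq2 z

theorem shrinkage_rule_risk_bound
    (μhat : ℝ → ℝ) (hmeas : Measurable μhat)
    (hanti : ∀ x, μhat (-x) = -μhat x)
    (hshrink : ∀ x ≥ (0 : ℝ), 0 ≤ μhat x ∧ μhat x ≤ x)
    (μ : ℝ) (q : ℝ) (hq0 : 0 < q) (hq2 : q ≤ 2) :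
    ∫ x, |μhat x - μ| ^ q ∂(gaussianReal μ 1) ≤
      |μ| ^ q + ∫ z, |z| ^ q ∂(gaussianReal 0 1) := by
  -- the measure is a translate of the standard gaussian
  have hmap : gaussianReal μ 1 = (gaussianReal 0 1).map (· + μ) := by
    rw [gaussianReal_map_add_const, zero_add]
  -- pointwise bound |μhat x - μ| ≤ max |μ| |x - μ|
  have habs : ∀ x : ℝ, |μhat x - μ| ≤ max |μ| |x - μ| := by
    intro x
    rcases le_or_gt 0 x with hx | hx
    · obtain ⟨h1, h2⟩ := hshrink x hx
      have := abs_le_max_abs_abs (sub_le_sub_right h1 μ) (sub_le_sub_right h2 μ)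
      simpa [abs_neg] using this
    · obtain ⟨h1, h2⟩ := hshrink (-x) (by linarith)
      have h3 : μhat x = -μhat (-x) := by simpa using hanti (-x)
      have hx1 : x ≤ μhat x := by rw [h3]; linarith
      have hx2 : μhat x ≤ 0 := by rw [h3]; linarith
      have := abs_le_max_abs_abs (sub_le_sub_right hx1 μ) (sub_le_sub_right hx2 μ)
      simpa [abs_neg, max_comm] using this
  have hbound : ∀ x : ℝ, |μhat x - μ| ^ q ≤ |μ| ^ q + |x - μ| ^ q := by
    intro x
    have h1 : |μhat x - μ| ^ q ≤ (max |μ| |x - μ|) ^ q :=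
      Real.rpow_le_rpow (abs_nonneg _) (habs x) hq0.le
    rcases max_cases (|μ|) (|x - μ|) with ⟨hm, _⟩ | ⟨hm, _⟩ <;> rw [hm] at h1
    · exact h1.trans (le_add_of_nonneg_right (Real.rpow_nonneg (abs_nonneg _) q))
    · exact h1.trans (le_add_of_nonneg_left (Real.rpow_nonneg (abs_nonneg _) q))
  -- integrability of x ↦ |x - μ| ^ q with respect to gaussianReal μ 1
  have hIntμ : Integrable (fun x : ℝ => |x - μ| ^ q) (gaussianReal μ 1) := by
    rw [hmap, integrable_map_measure
      (by fun_prop : Measurable fun x : ℝ => |x - μ| ^ q).aestronglyMeasurable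
      (measurable_add_const μ).aemeasurable]
    have := integrable_abs_rpow_gaussian hq0 hq2
    refine this.congr (Filter.Eventually.of_forall fun z => ?_)
    simp [Function.comp]
  -- integrability of the LHS integrand
  have hIntL : Integrable (fun x : ℝ => |μhat x - μ| ^ q) (gaussianReal μ 1) := by
    refine ((integrable_const (|μ| ^ q)).add hIntμ).mono'
      ((by fun_prop : Measurable fun x : ℝ => |μhat x - μ| ^ q).aestronglyMeasurable)
      (Filter.Eventually.of_forall fun x => ?_)
    rw [Real.norm_eq_abs, abs_of_nonneg (Real.rpow_nonneg (abs_nonneg _) q)]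
    exact hbound x
  calc ∫ x, |μhat x - μ| ^ q ∂(gaussianReal μ 1)
      ≤ ∫ x, (|μ| ^ q + |x - μ| ^ q) ∂(gaussianReal μ 1) :=
        integral_mono hIntL ((integrable_const _).add hIntμ) hbound
    _ = |μ| ^ q + ∫ x, |x - μ| ^ q ∂(gaussianReal μ 1) := by
        rw [integral_add (integrable_const _) hIntμ, integral_const]
        simp
    _ = |μ| ^ q + ∫ z, |z| ^ q ∂(gaussianReal 0 1) := by
        congr 1
        rw [hmap, integral_map (measurable_add_const μ).aemeasurable
          (by fun_prop : Measurable fun x : ℝ => |x - μ| ^ q).aestronglyMeasurable]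
        simp
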